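/- Let d ≥ 2 and α > 0. The map A ↦ (det A)^α on the cone of d×d real positive semi-definite symmetric matrices is Λ-concave (i.e., concave along every segment [A, A+B] contained in the cone with det B = 0) if and only if α ≤ 1/(d-1). -/

import Mathlib

open Matrix

open scoped MatrixOrder in
lemma pencil_factor (d : ℕ) (P B : Matrix (Fin d) (Fin d) ℝ) (hP : P.PosSemidef)
    (hPd : P.det ≠ 0) (hB : B.IsHermitian) :
    ∃ μ : Fin d → ℝ, ((∏ i, μ i) * P.det = B.det ∧
      ∀ s : ℝ, (P + s • B).det = P.det * ∏ i, (1 + s * μ i)) := by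
  set R := CFC.sqrt P with hRdef
  have hRR : R * R = P := CFC.sqrt_mul_sqrt_self P hP.nonneg
  have hRH : Rᴴ = R := (CFC.sqrt_nonneg P).posSemidef.1
  have hRdet : R.det ≠ 0 := by
    intro h
    apply hPd
    rw [← hRR, det_mul, h, mul_zero]
  have hRu : IsUnit R.det := isUnit_iff_ne_zero.mpr hRdet
  have hinv : R⁻¹ * R = 1 := nonsing_inv_mul R hRu
  have hinv' : R * R⁻¹ = 1 := mul_nonsing_inv R hRu
  set N := R⁻¹ * B * R⁻¹ with hNdef
  have hNh : N.IsHermitian := by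
    have hRiH : (R⁻¹)ᴴ = R⁻¹ := by rw [conjTranspose_nonsing_inv, hRH]
    show Nᴴ = N
    rw [hNdef, conjTranspose_mul, conjTranspose_mul, hRiH, hB.eq, Matrix.mul_assoc]
  have hRBR : R * N * R = B := by
    rw [hNdef]
    calc R * (R⁻¹ * B * R⁻¹) * R = (R * R⁻¹) * B * (R⁻¹ * R) := by
          simp only [Matrix.mul_assoc]
        _ = B := by rw [hinv, hinv', Matrix.one_mul, Matrix.mul_one]
  refine ⟨hNh.eigenvalues, ?_, ?_⟩
  · have h1 : N.det = ∏ i, hNh.eigenvalues i := by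
      have := hNh.det_eq_prod_eigenvalues
      exact_mod_cast this
    have h2 : N.det * P.det = B.det := by
      rw [hNdef, det_mul, det_mul, det_nonsing_inv, Ring.inverse_eq_inv, ← hRR, det_mul]
      field_simp
    rw [← h1, h2]
  · intro s
    have hfact : P + s • B = R * (1 + s • N) * R := by
      rw [Matrix.mul_add, Matrix.mul_one, Matrix.add_mul, hRR, Matrix.mul_smul,
        Matrix.smul_mul, hRBR]
    rw [hfact, det_mul, det_mul, mul_comm R.det, mul_assoc, ← det_mul, hRR,
      mul_comm (1 + s • N).det P.det]
    congr 1
    -- det (1 + s • N) = ∏ i, (1 + s * μ i)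
    set U : Matrix (Fin d) (Fin d) ℝ := ↑(hNh.eigenvectorUnitary) with hU
    have hUU : U * star U = 1 := Matrix.mem_unitaryGroup_iff.mp hNh.eigenvectorUnitary.2
    have hspec : N = U * diagonal (RCLike.ofReal ∘ hNh.eigenvalues) * star U :=
      hNh.spectral_theorem
    have hco : (RCLike.ofReal ∘ hNh.eigenvalues : Fin d → ℝ) = hNh.eigenvalues := by
      funext i; simp [RCLike.ofReal]
    rw [hco] at hspec
    have hmain : (1 : Matrix (Fin d) (Fin d) ℝ) + s • N
        = U * diagonal (fun i => 1 + s * hNh.eigenvalues i) * star U := by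
      have hd : diagonal (fun i => 1 + s * hNh.eigenvalues i)
          = 1 + s • diagonal hNh.eigenvalues := by
        rw [← diagonal_one, ← diagonal_smul, diagonal_add]
        congr 1
      rw [hd, Matrix.mul_add, Matrix.add_mul, Matrix.mul_one, hUU]
      congr 1
      conv_lhs => rw [hspec]
      rw [Matrix.mul_smul, Matrix.smul_mul]
    have hdetU : U.det * (star U).det = 1 := by rw [← det_mul, hUU, det_one]
    rw [hmain, det_mul, det_mul, det_diagonal]
    linear_combination (∏ i, (1 + s * hNh.eigenvalues i)) * hdetU


lemma aux_concave (d : ℕ) (c α : ℝ) (hc : 0 < c) (hα : 0 < α) (μ : Fin d → ℝ)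
    (hqpos : ∀ t ∈ Set.Ioo (0:ℝ) 1, ∀ i, 0 < 1 + (t - 1/2) * μ i)
    (i₀ : Fin d) (hμ0 : μ i₀ = 0) (hle : ((d:ℝ) - 1) * α ≤ 1) :
    ConcaveOn ℝ (Set.Icc (0:ℝ) 1)
      (fun t => (c * ∏ i, (1 + (t - 1/2) * μ i)) ^ α) := by
  have hd1 : 1 ≤ d := Nat.one_le_iff_ne_zero.mpr (by rintro rfl; exact i₀.elim0)
  -- basic positivity of the base on Ioo
  have hbase : ∀ t ∈ Set.Ioo (0:ℝ) 1, 0 < c * ∏ i, (1 + (t - 1/2) * μ i) := by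
    intro t ht
    exact mul_pos hc (Finset.prod_pos fun i _ => hqpos t ht i)
  -- the q-derivative
  have hq' : ∀ (i : Fin d) (x : ℝ),
      HasDerivAt (fun t => 1 + (t - 1/2) * μ i) (μ i) x := by
    intro i x
    exact ((((hasDerivAt_id x).sub_const (1/2)).mul_const (μ i)).const_add 1).congr_deriv (by ring)
  -- G and its derivative
  have hG : ∀ x ∈ Set.Ioo (0:ℝ) 1,
      HasDerivAt (fun t => Real.exp (α * Real.log c
          + α * ∑ i, Real.log (1 + (t - 1/2) * μ i)))
        (Real.exp (α * Real.log c + α * ∑ i, Real.log (1 + (x - 1/2) * μ i))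
          * (α * ∑ i, μ i / (1 + (x - 1/2) * μ i))) x := by
    intro x hx
    have hsum : HasDerivAt (fun t => ∑ i, Real.log (1 + (t - 1/2) * μ i))
        (∑ i, μ i / (1 + (x - 1/2) * μ i)) x :=
      HasDerivAt.fun_sum fun i _ => (hq' i x).log (hqpos x hx i).ne'
    exact ((hsum.const_mul α).const_add (α * Real.log c)).exp
  -- F = G on Ioo
  have hFG : ∀ t ∈ Set.Ioo (0:ℝ) 1,
      (c * ∏ i, (1 + (t - 1/2) * μ i)) ^ α
        = Real.exp (α * Real.log c + α * ∑ i, Real.log (1 + (t - 1/2) * μ i)) := by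
    intro t ht
    rw [Real.rpow_def_of_pos (hbase t ht),
      Real.log_mul hc.ne' (Finset.prod_pos fun i _ => hqpos t ht i).ne',
      Real.log_prod (fun i _ => (hqpos t ht i).ne')]
    congr 1
    ring
  -- derivative of S
  have hS : ∀ x ∈ Set.Ioo (0:ℝ) 1,
      HasDerivAt (fun t => ∑ i, μ i / (1 + (t - 1/2) * μ i))
        (∑ i, -((μ i / (1 + (x - 1/2) * μ i)) ^ 2)) x := by
    intro x hx
    refine HasDerivAt.fun_sum fun i _ => ?_
    have h1 := (hasDerivAt_const x (μ i)).div (hq' i x) (hqpos x hx i).ne'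
    refine h1.congr_deriv ?_
    rw [div_pow]
    ring
  -- first derivative of F on Ioo
  have hF' : ∀ x ∈ Set.Ioo (0:ℝ) 1,
      HasDerivAt (fun t => (c * ∏ i, (1 + (t - 1/2) * μ i)) ^ α)
        ((c * ∏ i, (1 + (x - 1/2) * μ i)) ^ α
          * (α * ∑ i, μ i / (1 + (x - 1/2) * μ i))) x := by
    intro x hx
    have hev : (fun t => (c * ∏ i, (1 + (t - 1/2) * μ i)) ^ α)
        =ᶠ[nhds x] (fun t => Real.exp (α * Real.log c
          + α * ∑ i, Real.log (1 + (t - 1/2) * μ i))) :=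
      Filter.eventuallyEq_of_mem (isOpen_Ioo.mem_nhds hx) (fun t ht => hFG t ht)
    have := (hG x hx).congr_of_eventuallyEq hev
    rwa [← hFG x hx] at this
  -- second derivative of F' on Ioo
  have hF'' : ∀ x ∈ Set.Ioo (0:ℝ) 1,
      HasDerivAt (fun t => (c * ∏ i, (1 + (t - 1/2) * μ i)) ^ α
          * (α * ∑ i, μ i / (1 + (t - 1/2) * μ i)))
        ((c * ∏ i, (1 + (x - 1/2) * μ i)) ^ α
          * ((α * ∑ i, μ i / (1 + (x - 1/2) * μ i)) ^ 2
            - α * ∑ i, (μ i / (1 + (x - 1/2) * μ i)) ^ 2)) x := by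
    intro x hx
    have hmul := (hF' x hx).mul ((hS x hx).const_mul α)
    refine hmul.congr_deriv ?_
    rw [Finset.sum_neg_distrib]
    ring
  -- conclude
  refine concaveOn_of_hasDerivWithinAt2_nonpos (convex_Icc 0 1)
    (f' := fun x => (c * ∏ i, (1 + (x - 1/2) * μ i)) ^ α
      * (α * ∑ i, μ i / (1 + (x - 1/2) * μ i)))
    (f'' := fun x => (c * ∏ i, (1 + (x - 1/2) * μ i)) ^ α
      * ((α * ∑ i, μ i / (1 + (x - 1/2) * μ i)) ^ 2
        - α * ∑ i, (μ i / (1 + (x - 1/2) * μ i)) ^ 2)) ?_ ?_ ?_ ?_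
  · -- continuity
    have h1 : Continuous fun t : ℝ => c * ∏ i, (1 + (t - 1/2) * μ i) := by
      refine continuous_const.mul ?_
      exact continuous_finset_prod _ fun i _ => by continuity
    exact (continuous_iff_continuousAt.mpr fun x =>
      (Real.continuousAt_rpow_const _ α (Or.inr hα.le)).comp h1.continuousAt).continuousOn
  · intro x hx
    rw [interior_Icc] at hx
    exact (hF' x hx).hasDerivWithinAt
  · intro x hx
    rw [interior_Icc] at hx
    exact (hF'' x hx).hasDerivWithinAt
  · intro x hx
    rw [interior_Icc] at hx
    -- sign argument
    have hFx : (0:ℝ) ≤ (c * ∏ i, (1 + (x - 1/2) * μ i)) ^ α :=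
      Real.rpow_nonneg (hbase x hx).le _
    refine mul_nonpos_of_nonneg_of_nonpos hFx ?_
    set S := ∑ i, μ i / (1 + (x - 1/2) * μ i) with hSdef
    set T := ∑ i, (μ i / (1 + (x - 1/2) * μ i)) ^ 2 with hTdef
    have hT0 : 0 ≤ T := Finset.sum_nonneg fun i _ => sq_nonneg _
    have hSsq : S ^ 2 ≤ ((d:ℝ) - 1) * T := by
      have hterm0 : μ i₀ / (1 + (x - 1/2) * μ i₀) = 0 := by rw [hμ0]; simp
      have hSerase : S = ∑ i ∈ Finset.univ.erase i₀, μ i / (1 + (x - 1/2) * μ i) := by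
        rw [hSdef, ← Finset.add_sum_erase _ _ (Finset.mem_univ i₀), hterm0, zero_add]
      have hcs := sq_sum_le_card_mul_sum_sq
        (s := Finset.univ.erase i₀) (f := fun i => μ i / (1 + (x - 1/2) * μ i))
      have hcard : ((Finset.univ.erase i₀).card : ℝ) = (d:ℝ) - 1 := by
        rw [Finset.card_erase_of_mem (Finset.mem_univ i₀)]
        simp [Nat.cast_sub hd1]
      have hsub : ∑ i ∈ Finset.univ.erase i₀, (μ i / (1 + (x - 1/2) * μ i)) ^ 2 ≤ T := by
        rw [hTdef]
        exact Finset.sum_le_sum_of_subset_of_nonneg (Finset.subset_univ _)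
          (fun i _ _ => sq_nonneg _)
      calc S ^ 2 = (∑ i ∈ Finset.univ.erase i₀, μ i / (1 + (x - 1/2) * μ i)) ^ 2 := by
            rw [hSerase]
        _ ≤ ((Finset.univ.erase i₀).card : ℝ)
            * ∑ i ∈ Finset.univ.erase i₀, (μ i / (1 + (x - 1/2) * μ i)) ^ 2 := by
            exact_mod_cast hcs
        _ ≤ ((d:ℝ) - 1) * T := by
            rw [hcard]
            have : (0:ℝ) ≤ (d:ℝ) - 1 := by
              have : (1:ℝ) ≤ (d:ℝ) := by exact_mod_cast hd1
              linarith
            exact mul_le_mul_of_nonneg_left hsub this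
    nlinarith [mul_le_mul_of_nonneg_left hSsq (mul_pos hα hα).le,
      mul_nonneg hα.le hT0, mul_le_mul_of_nonneg_right hle (mul_nonneg hα.le hT0)]


private lemma aux_det_nonneg {d : ℕ} (M : Matrix (Fin d) (Fin d) ℝ) (hM : M.PosSemidef) :
    0 ≤ M.det := by
  rw [hM.1.det_eq_prod_eigenvalues]
  exact Finset.prod_nonneg fun i _ => by exact_mod_cast hM.eigenvalues_nonneg i

theorem stmt1_bwd (d : ℕ) (hd : 2 ≤ d) (α : ℝ) (hα : 0 < α) (hle : α ≤ 1 / ((d:ℝ) - 1))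
    (A C : Matrix (Fin d) (Fin d) ℝ) (hA : A.PosSemidef) (hC : C.PosSemidef)
    (hdet : (C - A).det = 0) :
    ConcaveOn ℝ (Set.Icc (0:ℝ) 1)
      (fun t : ℝ => ((1 - t) • A + t • C).det ^ α) := by
  have hrw : ∀ t : ℝ, (1 - t) • A + t • C = A + t • (C - A) := by
    intro t
    rw [sub_smul, one_smul, smul_sub]
    abel
  have hfun : (fun t : ℝ => ((1 - t) • A + t • C).det ^ α)
      = fun t : ℝ => ((A + t • (C - A)).det) ^ α := by
    funext t; rw [hrw]
  have hPSD : ∀ t ∈ Set.Icc (0:ℝ) 1, (A + t • (C - A)).PosSemidef := by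
    intro t ht
    rw [← hrw t]
    refine PosSemidef.of_dotProduct_mulVec_nonneg ?_ ?_
    · show _ᴴ = _
      rw [conjTranspose_add, conjTranspose_smul, conjTranspose_smul, hA.1.eq, hC.1.eq,
        star_trivial, star_trivial]
    · intro x
      rw [add_mulVec, dotProduct_add, smul_mulVec, smul_mulVec,
        dotProduct_smul, dotProduct_smul, smul_eq_mul, smul_eq_mul]
      have h1 : (0:ℝ) ≤ 1 - t := by linarith [ht.2]
      exact add_nonneg (mul_nonneg h1 (hA.dotProduct_mulVec_nonneg x)) (mul_nonneg ht.1 (hC.dotProduct_mulVec_nonneg x))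
  rw [hfun]
  by_cases hz : ∃ t₀ ∈ Set.Ioo (0:ℝ) 1, (A + t₀ • (C - A)).det = 0
  · -- degenerate case: determinant vanishes identically on [0,1]
    obtain ⟨t₀, ht₀, h0⟩ := hz
    rw [← Matrix.exists_mulVec_eq_zero_iff] at h0
    obtain ⟨v, hv, hMv⟩ := h0
    set a := v ⬝ᵥ A *ᵥ v with hadef
    set bb := v ⬝ᵥ (C - A) *ᵥ v with hbdef
    have hgen : ∀ t : ℝ, v ⬝ᵥ (A + t • (C - A)) *ᵥ v = a + t * bb := by
      intro t
      rw [add_mulVec, dotProduct_add, smul_mulVec, dotProduct_smul, smul_eq_mul]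
    have ha0 : 0 ≤ a := by simpa using hA.dotProduct_mulVec_nonneg v
    have hc0 : 0 ≤ a + bb := by
      have h1 := (hPSD 1 (by norm_num)).dotProduct_mulVec_nonneg v
      rw [star_trivial, hgen 1] at h1
      linarith
    have ht0eq : a + t₀ * bb = 0 := by
      rw [← hgen t₀, hMv, dotProduct_zero]
    have haz : a = 0 ∧ bb = 0 := by
      obtain ⟨h1, h2⟩ := ht₀
      constructor <;> nlinarith
    have hzero : ∀ t ∈ Set.Icc (0:ℝ) 1, (A + t • (C - A)).det = 0 := by
      intro t ht
      rw [← Matrix.exists_mulVec_eq_zero_iff]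
      refine ⟨v, hv, ?_⟩
      have hdp : v ⬝ᵥ (A + t • (C - A)) *ᵥ v = 0 := by
        rw [hgen t, haz.1, haz.2]; ring
      have := ((hPSD t ht).dotProduct_mulVec_zero_iff v)
      rw [star_trivial] at this
      exact this.mp hdp
    refine ⟨convex_Icc 0 1, ?_⟩
    intro x hx y hy p q hp hq hpq
    have hxy := (convex_Icc (0:ℝ) 1) hx hy hp hq hpq
    simp only [smul_eq_mul]
    rw [hzero x hx, hzero y hy, hzero (p * x + q * y) (by simpa using hxy),
      Real.zero_rpow hα.ne']
    simp
  · -- positive case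
    push_neg at hz
    have h2 : (1:ℝ)/2 ∈ Set.Icc (0:ℝ) 1 := by norm_num
    have h2' : (1:ℝ)/2 ∈ Set.Ioo (0:ℝ) 1 := by norm_num
    have hPmem := hPSD (1/2) h2
    have hPdet := hz (1/2) h2'
    have hB : (C - A).IsHermitian := hC.1.sub hA.1
    obtain ⟨μ, hμprod, hμfact⟩ := pencil_factor d (A + (1/2:ℝ) • (C - A)) (C - A)
      hPmem hPdet hB
    have hAt : ∀ t : ℝ, A + t • (C - A)
        = (A + (1/2:ℝ) • (C - A)) + (t - 1/2) • (C - A) := by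
      intro t
      rw [sub_smul]
      abel
    have hdetfact : ∀ t : ℝ, (A + t • (C - A)).det
        = (A + (1/2:ℝ) • (C - A)).det * ∏ i, (1 + (t - 1/2) * μ i) := by
      intro t
      rw [hAt t, hμfact]
    set c := (A + (1/2:ℝ) • (C - A)).det with hcdef
    have hc : 0 < c := lt_of_le_of_ne (aux_det_nonneg _ hPmem) (Ne.symm hPdet)
    have hprodμ : ∏ i, μ i = 0 := by
      have : (∏ i, μ i) * c = 0 := by rw [hμprod, hdet]
      rcases mul_eq_zero.mp this with h | h
      · exact h
      · exact absurd h hPdet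
    obtain ⟨i₀, _, hμ0⟩ := Finset.prod_eq_zero_iff.mp hprodμ
    have hqpos : ∀ t ∈ Set.Ioo (0:ℝ) 1, ∀ i, 0 < 1 + (t - 1/2) * μ i := by
      intro t ht i
      by_contra hcon
      push_neg at hcon
      have hcont : Continuous fun s : ℝ => 1 + (s - 1/2) * μ i :=
        continuous_const.add ((continuous_id.sub continuous_const).mul continuous_const)
      have hkill : ∀ s ∈ Set.Ioo (0:ℝ) 1, 1 + (s - 1/2) * μ i = 0 → False := by
        intro s hs hfs
        apply hz s hs
        rw [hdetfact s]
        exact mul_eq_zero_of_right _ (Finset.prod_eq_zero (Finset.mem_univ i) hfs)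
      rcases le_total t (1/2) with hle2 | hle2
      · have hsub := intermediate_value_Icc hle2 hcont.continuousOn
        have h0mem : (0:ℝ) ∈ Set.Icc (1 + (t - 1/2) * μ i) (1 + ((1:ℝ)/2 - 1/2) * μ i) := by
          constructor
          · exact hcon
          · norm_num
        obtain ⟨s, hs, hfs⟩ := hsub h0mem
        exact hkill s ⟨lt_of_lt_of_le ht.1 hs.1, lt_of_le_of_lt hs.2 (by norm_num)⟩ hfs
      · have hsub := intermediate_value_Icc' hle2 hcont.continuousOn
        have h0mem : (0:ℝ) ∈ Set.Icc (1 + (t - 1/2) * μ i) (1 + ((1:ℝ)/2 - 1/2) * μ i) := by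
          constructor
          · exact hcon
          · norm_num
        obtain ⟨s, hs, hfs⟩ := hsub h0mem
        exact hkill s ⟨lt_of_lt_of_le (by norm_num) hs.1, lt_of_le_of_lt hs.2 ht.2⟩ hfs
    have hdpos : (0:ℝ) < (d:ℝ) - 1 := by
      have : (2:ℝ) ≤ (d:ℝ) := by exact_mod_cast hd
      linarith
    have hle' : ((d:ℝ) - 1) * α ≤ 1 := by
      rw [le_div_iff₀ hdpos] at hle
      linarith
    have hres := aux_concave d c α hc hα μ hqpos i₀ hμ0 hle'
    have : (fun t : ℝ => ((A + t • (C - A)).det) ^ α)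
        = fun t : ℝ => (c * ∏ i, (1 + (t - 1/2) * μ i)) ^ α := by
      funext t
      rw [hdetfact t]
    rw [this]
    exact hres


theorem stmt1_fwd (d : ℕ) (hd : 2 ≤ d) (α : ℝ) (hα : 0 < α)
    (h : ∀ A C : Matrix (Fin d) (Fin d) ℝ,
        A.PosSemidef → C.PosSemidef → (C - A).det = 0 →
        ConcaveOn ℝ (Set.Icc (0:ℝ) 1)
          (fun t : ℝ => ((1 - t) • A + t • C).det ^ α)) :
    α ≤ 1 / ((d:ℝ) - 1) := by
  have hd0 : 0 < d := by omega
  set i₀ : Fin d := ⟨0, hd0⟩ with hi₀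
  set A : Matrix (Fin d) (Fin d) ℝ := diagonal (fun i => if i = i₀ then 1 else 0) with hAdef
  set C : Matrix (Fin d) (Fin d) ℝ := diagonal (fun _ => (1:ℝ)) with hCdef
  have hA : A.PosSemidef := PosSemidef.diagonal (fun i => by dsimp; split <;> norm_num)
  have hC : C.PosSemidef := PosSemidef.diagonal (fun i => by norm_num)
  have hdetCA : (C - A).det = 0 := by
    rw [hAdef, hCdef, diagonal_sub, det_diagonal]
    exact Finset.prod_eq_zero (Finset.mem_univ i₀) (by simp)
  have hdetT : ∀ t : ℝ, ((1 - t) • A + t • C).det = t ^ (d - 1) := by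
    intro t
    rw [hAdef, hCdef, ← diagonal_smul, ← diagonal_smul, diagonal_add, det_diagonal]
    have hfac : ∀ i : Fin d,
        ((1 - t) • fun i => if i = i₀ then (1:ℝ) else 0) i + (t • fun _ => (1:ℝ)) i
          = if i = i₀ then 1 else t := by
      intro i
      simp only [Pi.smul_apply, smul_eq_mul]
      split <;> ring
    rw [Finset.prod_congr rfl (fun i _ => hfac i),
      ← Finset.mul_prod_erase Finset.univ _ (Finset.mem_univ i₀), if_pos rfl, one_mul,
      Finset.prod_congr rfl (fun i hi => if_neg (Finset.ne_of_mem_erase hi)),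
      Finset.prod_const, Finset.card_erase_of_mem (Finset.mem_univ i₀), Finset.card_univ,
      Fintype.card_fin]
  have hcon := h A C hA hC hdetCA
  have h01 : (0:ℝ) ∈ Set.Icc (0:ℝ) 1 := by norm_num
  have h11 : (1:ℝ) ∈ Set.Icc (0:ℝ) 1 := by norm_num
  have hkey := hcon.2 h01 h11 (by norm_num : (0:ℝ) ≤ 1/2) (by norm_num : (0:ℝ) ≤ 1/2)
    (by norm_num)
  simp only [smul_eq_mul] at hkey
  rw [hdetT 0, hdetT 1, hdetT (1/2 * 0 + 1/2 * 1)] at hkey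
  have hd1 : d - 1 ≠ 0 := by omega
  rw [zero_pow hd1, Real.zero_rpow hα.ne', one_pow, Real.one_rpow] at hkey
  norm_num at hkey
  -- hkey : 1/2 ≤ ((1/2) ^ (d-1)) ^ α  (in some normalized form)
  have harg : ((1/2 : ℝ) ^ (d - 1)) ^ α = (1/2 : ℝ) ^ (((d:ℝ) - 1) * α) := by
    rw [← Real.rpow_natCast (1/2 : ℝ) (d - 1), ← Real.rpow_mul (by norm_num)]
    congr 1
    push_cast [Nat.cast_sub (by omega : 1 ≤ d)]
    ring
  have hkey2 : (1/2 : ℝ) ^ (1:ℝ) ≤ (1/2 : ℝ) ^ (((d:ℝ) - 1) * α) := by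
    rw [Real.rpow_one, ← harg]
    convert hkey using 2 <;> norm_num
  have hexp := (Real.rpow_le_rpow_left_iff_of_base_lt_one (by norm_num) (by norm_num)).mp hkey2
  have hdpos : (0:ℝ) < (d:ℝ) - 1 := by
    have : (2:ℝ) ≤ (d:ℝ) := by exact_mod_cast hd
    linarith
  rw [le_div_iff₀ hdpos]
  linarith


theorem stmt1 (d : ℕ) (hd : 2 ≤ d) (α : ℝ) (hα : 0 < α) :
    (∀ A C : Matrix (Fin d) (Fin d) ℝ,
        A.PosSemidef → C.PosSemidef → (C - A).det = 0 →
        ConcaveOn ℝ (Set.Icc (0:ℝ) 1)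
          (fun t : ℝ => ((1 - t) • A + t • C).det ^ α))
      ↔ α ≤ 1 / (d - 1) := by
  constructor
  · intro h
    exact stmt1_fwd d hd α hα h
  · intro hle A C hA hC hdet
    exact stmt1_bwd d hd α hα hle A C hA hC hdet
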